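/- For a convex polygon Ω with m vertices, a point p ∈ int(Ω), and a radius ρ > 0, the Hilbert ball B(p,ρ) is a convex polygon with at most 2m vertices; specifically, B(p,ρ) equals the convex hull of the 2m points obtained by moving Hilbert distance ρ from p along each of the m spokes (chords from p through each vertex of Ω) in both directions. -/

import Mathlib

open Filter Topology
open scoped Classical Pointwise

/-- The parameter at which the ray `t ↦ p + t • v` exits the set `Ω`. -/
noncomputable def exitTime (Ω : Set (EuclideanSpace ℝ (Fin 2)))
    (p v : EuclideanSpace ℝ (Fin 2)) : ℝ :=
  sSup {t : ℝ | p + t • v ∈ Ω}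

/-- The endpoint of the chord of `Ω` from `p` in direction `v`. -/
noncomputable def chordEnd (Ω : Set (EuclideanSpace ℝ (Fin 2)))
    (p v : EuclideanSpace ℝ (Fin 2)) : EuclideanSpace ℝ (Fin 2) :=
  p + exitTime Ω p v • v

/-- The Hilbert distance in the convex body `Ω`: for distinct `p q`, with chord
endpoints `p' = chordEnd Ω p (p - q)` (beyond `p`) and `q' = chordEnd Ω q (q - p)`
(beyond `q`), ordered `⟨p', p, q, q'⟩`,
`d_Ω(p,q) = (1/2) log ((‖q - p'‖/‖p - p'‖) * (‖p - q'‖/‖q - q'‖))`. -/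
noncomputable def hilbertDist (Ω : Set (EuclideanSpace ℝ (Fin 2)))
    (p q : EuclideanSpace ℝ (Fin 2)) : ℝ :=
  if p = q then 0
  else
    (1 / 2) * Real.log
      ((‖q - chordEnd Ω p (p - q)‖ / ‖p - chordEnd Ω p (p - q)‖) *
        (‖p - chordEnd Ω q (q - p)‖ / ‖q - chordEnd Ω q (q - p)‖))

/-- A convex body in the plane: compact, convex, with nonempty interior. -/
def IsConvexBody (Ω : Set (EuclideanSpace ℝ (Fin 2))) : Prop :=
  IsCompact Ω ∧ Convex ℝ Ω ∧ (interior Ω).Nonempty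

section HilbertAux

open Set Metric Bornology

local notation "E2" => EuclideanSpace ℝ (Fin 2)

lemma gauge_pos_of_ne_zero {D : Set E2} (hD0 : D ∈ 𝓝 0) (hDb : IsBounded D)
    {w : E2} (hw : w ≠ 0) : 0 < gauge D w := by
  obtain ⟨R, hR0, hR⟩ := hDb.subset_ball_lt 0 0
  have h1 : gauge (Metric.ball (0:E2) R) w ≤ gauge D w :=
    gauge_mono (absorbent_nhds_zero hD0) hR w
  rw [gauge_ball hR0.le] at h1
  exact lt_of_lt_of_le (div_pos (norm_pos_iff.2 hw) hR0) h1

lemma isGreatest_shift {D : Set E2} (hDc : Convex ℝ D) (hD0 : D ∈ 𝓝 0)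
    (hDcl : IsClosed D) (hDb : IsBounded D) {v : E2} (hv : v ≠ 0) (c : ℝ) :
    IsGreatest {t : ℝ | (c + t) • v ∈ D} ((gauge D v)⁻¹ - c) := by
  have hb : 0 < gauge D v := gauge_pos_of_ne_zero hD0 hDb hv
  have hmem1 : ∀ z : E2, gauge D z ≤ 1 → z ∈ D := fun z hz => by
    rw [← hDcl.closure_eq]
    exact (gauge_le_one_iff_mem_closure hDc hD0).1 hz
  constructor
  · show (c + ((gauge D v)⁻¹ - c)) • v ∈ D
    have he : c + ((gauge D v)⁻¹ - c) = (gauge D v)⁻¹ := by ring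
    rw [he]
    apply hmem1
    rw [gauge_smul_of_nonneg (by positivity), smul_eq_mul, inv_mul_cancel₀ hb.ne']
  · intro t ht
    have hle : gauge D ((c + t) • v) ≤ 1 := gauge_le_one_of_mem ht
    by_contra hlt
    push_neg at hlt
    have hct : (gauge D v)⁻¹ < c + t := by linarith
    have hpos : (0:ℝ) < c + t := lt_trans (by positivity) hct
    rw [gauge_smul_of_nonneg hpos.le, smul_eq_mul] at hle
    have : (gauge D v)⁻¹ * gauge D v < (c + t) * gauge D v :=
      mul_lt_mul_of_pos_right hct hb
    rw [inv_mul_cancel₀ hb.ne'] at this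
    linarith

lemma hilbertDist_formula {Ω : Set E2} (hc : Convex ℝ Ω) (hcomp : IsCompact Ω)
    {p : E2} (hp : p ∈ interior Ω) {w : E2} (hw : w ≠ 0)
    (hmem : p + w ∈ interior Ω) :
    hilbertDist Ω p (p + w) =
      (1/2) * Real.log ((1 + gauge ((p + ·) ⁻¹' Ω) (-w)) / (1 - gauge ((p + ·) ⁻¹' Ω) w)) := by
  set D : Set E2 := (p + ·) ⁻¹' Ω with hD
  have hDc : Convex ℝ D := by
    intro x hx y hy s t hs ht hst
    simp only [hD, Set.mem_preimage] at hx hy ⊢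
    have he : p + (s • x + t • y) = s • (p + x) + t • (p + y) := by
      have : s • (p + x) + t • (p + y) = (s + t) • p + (s • x + t • y) := by module
      rw [this, hst, one_smul]
    rw [he]
    exact hc hx hy hs ht hst
  have himg : D = (fun x => x - p) '' Ω := by
    ext z
    simp only [hD, Set.mem_preimage, Set.mem_image]
    constructor
    · intro h; exact ⟨p + z, h, by abel⟩
    · rintro ⟨x, hx, rfl⟩
      have : p + (x - p) = x := by abel
      rwa [this]
  have hDcomp : IsCompact D := himg ▸ hcomp.image (continuous_id.sub continuous_const)
  have hDcl := hDcomp.isClosed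
  have hDb := hDcomp.isBounded
  have hintD : interior D = (p + ·) ⁻¹' interior Ω :=
    ((Homeomorph.addLeft p).preimage_interior Ω).symm
  have h0 : (0:E2) ∈ interior D := by
    rw [hintD]; simpa using hp
  have hD0 : D ∈ 𝓝 0 := mem_interior_iff_mem_nhds.1 h0
  have hwD : w ∈ interior D := by rw [hintD]; exact hmem
  have hb1 : gauge D w < 1 := (gauge_lt_one_iff_mem_interior hDc hD0).2 hwD
  have ha : 0 < gauge D (-w) := gauge_pos_of_ne_zero hD0 hDb (neg_ne_zero.2 hw)
  have hbpos : 0 < gauge D w := gauge_pos_of_ne_zero hD0 hDb hw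
  set a := gauge D (-w) with hadef
  set b := gauge D w with hbdef
  have hne : p ≠ p + w := by
    intro h
    exact hw (by simpa using h.symm)
  have e1 : exitTime Ω p (p - (p + w)) = a⁻¹ := by
    have hpw : p - (p + w) = -w := by abel
    rw [exitTime, hpw]
    have hset : {t : ℝ | p + t • (-w) ∈ Ω} = {t : ℝ | (0 + t) • (-w) ∈ D} := by
      ext t; simp [hD, zero_add]
    rw [hset, (isGreatest_shift hDc hD0 hDcl hDb (neg_ne_zero.2 hw) 0).csSup_eq]
    rw [sub_zero]
  have e2 : exitTime Ω (p + w) ((p + w) - p) = b⁻¹ - 1 := by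
    have hpw : (p + w) - p = w := by abel
    rw [exitTime, hpw]
    have hset : {t : ℝ | (p + w) + t • w ∈ Ω} = {t : ℝ | (1 + t) • w ∈ D} := by
      ext t
      simp only [Set.mem_setOf_eq, hD, Set.mem_preimage]
      have : p + (1 + t) • w = (p + w) + t • w := by
        rw [add_smul, one_smul]; abel
      rw [this]
    rw [hset, (isGreatest_shift hDc hD0 hDcl hDb hw 1).csSup_eq]
  have c1 : chordEnd Ω p (p - (p + w)) = p + a⁻¹ • (-w) := by
    rw [chordEnd, e1, show p - (p + w) = -w from by abel]
  have c2 : chordEnd Ω (p + w) ((p + w) - p) = p + b⁻¹ • w := by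
    rw [chordEnd, e2, show (p + w) - p = w from by abel]
    module
  have hwn : (0:ℝ) < ‖w‖ := norm_pos_iff.2 hw
  have hbi : (1:ℝ) < b⁻¹ := by
    have h1 : b * b⁻¹ = 1 := mul_inv_cancel₀ hbpos.ne'
    nlinarith
  have n1 : ‖(p + w) - (p + a⁻¹ • (-w))‖ = (1 + a⁻¹) * ‖w‖ := by
    have he : (p + w) - (p + a⁻¹ • (-w)) = (1 + a⁻¹) • w := by module
    rw [he, norm_smul, Real.norm_eq_abs, abs_of_pos (by positivity)]
  have n2 : ‖p - (p + a⁻¹ • (-w))‖ = a⁻¹ * ‖w‖ := by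
    have he : p - (p + a⁻¹ • (-w)) = a⁻¹ • w := by module
    rw [he, norm_smul, Real.norm_eq_abs, abs_of_pos (by positivity)]
  have n3 : ‖p - (p + b⁻¹ • w)‖ = b⁻¹ * ‖w‖ := by
    have he : p - (p + b⁻¹ • w) = (-b⁻¹) • w := by module
    rw [he, norm_smul, Real.norm_eq_abs, abs_neg, abs_of_pos (by positivity)]
  have n4 : ‖(p + w) - (p + b⁻¹ • w)‖ = (b⁻¹ - 1) * ‖w‖ := by
    have he : (p + w) - (p + b⁻¹ • w) = (1 - b⁻¹) • w := by module
    rw [he, norm_smul, Real.norm_eq_abs, abs_of_neg (by linarith)]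
    ring
  rw [hilbertDist, if_neg hne, c1, c2, n1, n2, n3, n4]
  congr 1
  have h1b : (0:ℝ) < 1 - b := by linarith
  have h2 : b⁻¹ - 1 ≠ 0 := ne_of_gt (by linarith)
  rw [show ((1 + a⁻¹) * ‖w‖ / (a⁻¹ * ‖w‖)) * ((b⁻¹ * ‖w‖) / ((b⁻¹ - 1) * ‖w‖))
      = (1 + a) / (1 - b) from by field_simp; ring]

lemma support_at {D : Set E2} (hDc : Convex ℝ D) (hDcl : IsClosed D)
    (hDb : Bornology.IsBounded D) (hD0 : D ∈ 𝓝 0)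
    {x0 : E2} (hx0g : gauge D x0 = 1) (hx0ne : x0 ∉ D.extremePoints ℝ) :
    ∃ (x1 x2 : E2) (f : E2 →L[ℝ] ℝ) (s t : ℝ), x1 ∈ D ∧ x2 ∈ D ∧ x1 ≠ x2 ∧
      0 < s ∧ 0 < t ∧ s + t = 1 ∧ s • x1 + t • x2 = x0 ∧
      0 < f x0 ∧ f x1 = f x0 ∧ f x2 = f x0 ∧
      (∀ α β : ℝ, 0 ≤ α → 0 ≤ β → gauge D (α • x1 + β • x2) = α + β) := by
  have hmem1 : ∀ z : E2, gauge D z ≤ 1 → z ∈ D := fun z hz => by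
    rw [← hDcl.closure_eq]; exact (gauge_le_one_iff_mem_closure hDc hD0).1 hz
  have hx0D : x0 ∈ D := hmem1 _ hx0g.le
  rw [mem_extremePoints] at hx0ne
  push_neg at hx0ne
  obtain ⟨x1, hx1D, x2, hx2D, hseg, hne⟩ := hx0ne hx0D
  obtain ⟨s, t, hs, ht, hst, hcomb⟩ := hseg
  have h12 : x1 ≠ x2 := by
    rintro rfl
    have hx : x1 = x0 := by rw [← hcomb, ← add_smul, hst, one_smul]
    exact hne hx hx
  have hx0ni : x0 ∉ interior D := fun hmem =>
    absurd ((gauge_lt_one_iff_mem_interior hDc hD0).2 hmem)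
      (by rw [hx0g]; exact lt_irrefl 1)
  obtain ⟨f, hf⟩ := geometric_hahn_banach_open_point (hDc.interior) isOpen_interior hx0ni
  have h0i : (0:E2) ∈ interior D := mem_interior_iff_mem_nhds.2 hD0
  have hf0 : 0 < f x0 := by have := hf 0 h0i; simpa using this
  have hfD : ∀ z ∈ D, f z ≤ f x0 := by
    intro z hz
    by_contra hgt
    push_neg at hgt
    have hfz : 0 < f z := lt_trans hf0 hgt
    set u : ℝ := (f x0 + f z) / (2 * f z) with hu
    have hu0 : 0 < u := by positivity
    have hu1 : u < 1 := by rw [hu, div_lt_one (by positivity)]; linarith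
    have humem : u • z ∈ interior D := by
      have := hDc.combo_interior_closure_mem_interior h0i (subset_closure hz)
        (by linarith : (0:ℝ) < 1 - u) hu0.le (by ring)
      simpa using this
    have hlt := hf _ humem
    rw [map_smul, smul_eq_mul] at hlt
    have heq : u * f z = (f x0 + f z) / 2 := by rw [hu]; field_simp
    rw [heq] at hlt
    linarith
  have hfg : ∀ z : E2, f z ≤ gauge D z * f x0 := by
    intro z
    rcases eq_or_ne z 0 with rfl | hz
    · simp [gauge_zero]
    · have hgz : 0 < gauge D z := gauge_pos_of_ne_zero hD0 hDb hz
      have hm : (gauge D z)⁻¹ • z ∈ D := by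
        apply hmem1
        rw [gauge_smul_of_nonneg (by positivity), smul_eq_mul, inv_mul_cancel₀ hgz.ne']
      have hfm := hfD _ hm
      rw [map_smul, smul_eq_mul] at hfm
      calc f z = gauge D z * ((gauge D z)⁻¹ * f z) := by field_simp
        _ ≤ gauge D z * f x0 := mul_le_mul_of_nonneg_left hfm hgz.le
  have he : s * f x1 + t * f x2 = f x0 := by
    rw [← hcomb, map_add, map_smul, map_smul, smul_eq_mul, smul_eq_mul]
  have l1 : f x1 ≤ f x0 := hfD _ hx1D
  have l2 : f x2 ≤ f x0 := hfD _ hx2D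
  have k1 : f x1 = f x0 := by
    refine le_antisymm l1 ?_
    nlinarith [mul_le_mul_of_nonneg_left l2 ht.le]
  have k2 : f x2 = f x0 := by
    refine le_antisymm l2 ?_
    nlinarith [mul_le_mul_of_nonneg_left l1 hs.le]
  have hcone : ∀ α β : ℝ, 0 ≤ α → 0 ≤ β → gauge D (α • x1 + β • x2) = α + β := by
    intro α β hα hβ
    rcases eq_or_lt_of_le (by positivity : (0:ℝ) ≤ α + β) with heq0 | hsum
    · have hα0 : α = 0 := by linarith
      have hβ0 : β = 0 := by linarith
      simp [hα0, hβ0, gauge_zero]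
    · apply le_antisymm
      · have hmemc : (α/(α+β)) • x1 + (β/(α+β)) • x2 ∈ D :=
          hDc hx1D hx2D (by positivity) (by positivity) (by field_simp)
        have hrw : α • x1 + β • x2 = (α+β) • ((α/(α+β)) • x1 + (β/(α+β)) • x2) := by
          rw [smul_add, smul_smul, smul_smul]
          congr 2 <;> field_simp
        rw [hrw, gauge_smul_of_nonneg hsum.le, smul_eq_mul]
        have := gauge_le_one_of_mem hmemc
        nlinarith
      · have hfc : f (α • x1 + β • x2) = (α + β) * f x0 := by
          rw [map_add, map_smul, map_smul, smul_eq_mul, smul_eq_mul, k1, k2]; ring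
        have hle := hfg (α • x1 + β • x2)
        rw [hfc] at hle
        nlinarith [hle, hf0]
  exact ⟨x1, x2, f, s, t, hx1D, hx2D, h12, hs, ht, hst, hcomb, hf0, k1, k2, hcone⟩

set_option maxHeartbeats 2000000 in
lemma ball_eq_hull {D : Set E2} (hDc : Convex ℝ D) (hDcomp : IsCompact D) (hD0 : D ∈ 𝓝 0)
    (A : Finset E2) (hA0 : ∀ d ∈ A, d ≠ (0:E2)) (hAsym : ∀ d ∈ A, -d ∈ A)
    (hext : D.extremePoints ℝ ⊆ ↑A ∪ {0}) {K : ℝ} (hK : 1 < K) :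
    {w : E2 | gauge D (-w) + K * gauge D w ≤ K - 1} =
      convexHull ℝ ((fun d => ((K-1)/(gauge D (-d) + K * gauge D d)) • d) '' ↑A) := by
  have hDb := hDcomp.isBounded
  have hDcl := hDcomp.isClosed
  have hK0 : (0:ℝ) < K - 1 := by linarith
  set h : E2 → ℝ := fun w => gauge D (-w) + K * gauge D w with hh
  set sp : E2 → E2 := fun d => ((K-1)/(h d)) • d with hsp
  set B : Set E2 := {w : E2 | h w ≤ K - 1} with hB
  have hpos : ∀ w : E2, w ≠ 0 → 0 < h w := fun w hw => by
    have h1 : 0 < gauge D w := gauge_pos_of_ne_zero hD0 hDb hw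
    have h2 : 0 ≤ gauge D (-w) := gauge_nonneg _
    have : 0 < K * gauge D w := by positivity
    simp only [hh]; linarith
  have hhom : ∀ (t : ℝ), 0 ≤ t → ∀ w : E2, h (t • w) = t * h w := fun t ht w => by
    simp only [hh, ← smul_neg, gauge_smul_of_nonneg ht, smul_eq_mul]; ring
  have hadd : ∀ u w : E2, h (u + w) ≤ h u + h w := fun u w => by
    simp only [hh, neg_add]
    have g1 := gauge_add_le hDc (absorbent_nhds_zero hD0) (-u) (-w)
    have g2 := gauge_add_le hDc (absorbent_nhds_zero hD0) u w
    nlinarith [g2, mul_le_mul_of_nonneg_left g2 (by linarith : (0:ℝ) ≤ K)]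
  have hmem1 : ∀ z : E2, gauge D z ≤ 1 → z ∈ D := fun z hz => by
    rw [← hDcl.closure_eq]
    exact (gauge_le_one_iff_mem_closure hDc hD0).1 hz
  have hBsub : B ⊆ D := fun w hwB => by
    apply hmem1
    have h2 : 0 ≤ gauge D (-w) := gauge_nonneg _
    have h3 : K * gauge D w ≤ K - 1 := by
      have := hwB; simp only [hB, Set.mem_setOf_eq, hh] at this; linarith
    have : gauge D w ≤ (K - 1) / K := by
      rw [le_div_iff₀ (by linarith : (0:ℝ) < K)]; linarith [h3]
    nlinarith [this]
  have hBconv : Convex ℝ B := by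
    intro x hx y hy s t hs ht hst
    simp only [hB, Set.mem_setOf_eq] at hx hy ⊢
    calc h (s • x + t • y) ≤ h (s • x) + h (t • y) := hadd _ _
      _ = s * h x + t * h y := by rw [hhom s hs, hhom t ht]
      _ ≤ s * (K - 1) + t * (K - 1) :=
          add_le_add (mul_le_mul_of_nonneg_left hx hs) (mul_le_mul_of_nonneg_left hy ht)
      _ = K - 1 := by rw [← add_mul, hst, one_mul]
  have hBclosed : IsClosed B := by
    have hcont : Continuous h := by
      have := continuous_gauge hDc hD0
      exact ((this.comp continuous_neg).add (continuous_const.mul this))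
    exact isClosed_le hcont continuous_const
  have hBcomp : IsCompact B := hDcomp.of_isClosed_subset hBclosed hBsub
  have hspB : ∀ d ∈ A, h (sp d) = K - 1 := fun d hd => by
    have hdne := hA0 d hd
    have hpd := hpos d hdne
    simp only [hsp]
    rw [hhom _ (by positivity), div_mul_cancel₀ _ hpd.ne']
  have hextB : B.extremePoints ℝ ⊆ sp '' ↑A := by
    intro w hwext
    obtain ⟨hwB, hwmin⟩ := hwext
    have hw1 : h w = K - 1 := by
      by_contra hnee
      have hlt : h w < K - 1 := lt_of_le_of_ne hwB hnee
      set v0 : E2 := EuclideanSpace.single 0 1 with hv0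
      have hv0ne : v0 ≠ 0 := by
        intro hv
        have h1 : v0 0 = 1 := by simp [hv0]
        rw [hv] at h1
        simp at h1
      have hnn : ∀ u : E2, 0 ≤ h u := fun u => by
        have h1 : 0 ≤ gauge D (-u) := gauge_nonneg _
        have h2 : 0 ≤ gauge D u := gauge_nonneg _
        have : 0 ≤ K * gauge D u := by nlinarith
        simp only [hh]; linarith
      set C : ℝ := max (h v0) (h (-v0)) + 1 with hC
      have hCpos : 0 < C := by
        have := le_max_left (h v0) (h (-v0))
        have := hnn v0
        simp only [hC]; linarith
      set ε : ℝ := (K - 1 - h w) / C with hε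
      have hεpos : 0 < ε := div_pos (by linarith) hCpos
      have key : ∀ u : E2, h u ≤ C - 1 → w + ε • u ∈ B := by
        intro u hu
        simp only [hB, Set.mem_setOf_eq]
        have hεC : ε * C = K - 1 - h w := by
          rw [hε]; field_simp
        calc h (w + ε • u) ≤ h w + h (ε • u) := hadd _ _
          _ = h w + ε * h u := by rw [hhom _ hεpos.le]
          _ ≤ h w + ε * (C - 1) := by nlinarith [hu, hεpos]
          _ ≤ K - 1 := by nlinarith [hεpos]
      have m1 : w + ε • v0 ∈ B := key v0 (by
        have := le_max_left (h v0) (h (-v0)); simp only [hC]; linarith)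
      have m2 : w + ε • (-v0) ∈ B := key (-v0) (by
        have := le_max_right (h v0) (h (-v0)); simp only [hC]; linarith)
      have hseg : w ∈ openSegment ℝ (w + ε • v0) (w + ε • (-v0)) := by
        refine ⟨1/2, 1/2, by norm_num, by norm_num, by norm_num, ?_⟩
        module
      have he1 := hwmin m1 m2 hseg
      have hz : ε • v0 = 0 := by
        have := he1
        rwa [add_eq_left] at this
      rcases smul_eq_zero.1 hz with hε0 | hv00
      · exact hεpos.ne' hε0
      · exact hv0ne hv00
    have hwne : w ≠ 0 := by
      rintro rfl
      simp only [hh, neg_zero, gauge_zero, mul_zero, add_zero] at hw1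
      linarith
    set b := gauge D w with hbdef
    set a := gauge D (-w) with hadef
    have hbpos : 0 < b := gauge_pos_of_ne_zero hD0 hDb hwne
    have hapos : 0 < a := gauge_pos_of_ne_zero hD0 hDb (neg_ne_zero.2 hwne)
    set x0 : E2 := b⁻¹ • w with hx0def
    set y0 : E2 := a⁻¹ • (-w) with hy0def
    have hx0g : gauge D x0 = 1 := by
      rw [hx0def, gauge_smul_of_nonneg (by positivity), smul_eq_mul, ← hbdef,
        inv_mul_cancel₀ hbpos.ne']
    have hy0g : gauge D y0 = 1 := by
      rw [hy0def, gauge_smul_of_nonneg (by positivity), smul_eq_mul, ← hadef,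
        inv_mul_cancel₀ hapos.ne']
    have hray : ∀ d ∈ A, ∀ c : ℝ, 0 < c → w = c • d → w ∈ sp '' ↑A := by
      intro d hd c hc hwc
      refine ⟨d, hd, ?_⟩
      have hdpos := hpos d (hA0 d hd)
      have hcb : h w = c * h d := by rw [hwc, hhom _ hc.le]
      rw [hw1] at hcb
      simp only [hsp]
      rw [hwc]
      congr 1
      field_simp
      linarith [hcb]
    by_cases hx0e : x0 ∈ D.extremePoints ℝ
    · have hx0A : x0 ∈ (↑A : Set E2) := by
        rcases hext hx0e with hmem | hmem
        · exact hmem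
        · exfalso
          rw [Set.mem_singleton_iff] at hmem
          rw [hmem, gauge_zero] at hx0g
          linarith
      apply hray x0 (Finset.mem_coe.1 hx0A) b hbpos
      rw [hx0def, smul_smul, mul_inv_cancel₀ hbpos.ne', one_smul]
    · by_cases hy0e : y0 ∈ D.extremePoints ℝ
      · have hy0A : y0 ∈ (↑A : Set E2) := by
          rcases hext hy0e with hmem | hmem
          · exact hmem
          · exfalso
            rw [Set.mem_singleton_iff] at hmem
            rw [hmem, gauge_zero] at hy0g
            linarith
        apply hray (-y0) (hAsym y0 (Finset.mem_coe.1 hy0A)) a hapos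
        rw [hy0def, show -(a⁻¹ • -w) = a⁻¹ • w from by module, smul_smul,
          mul_inv_cancel₀ hapos.ne', one_smul]
      · exfalso
        obtain ⟨x1, x2, f, s, t, hx1D, hx2D, h12, hs, ht, hst, hcombx, hf0, hfx1, hfx2, hconeX⟩ :=
          support_at hDc hDcl hDb hD0 hx0g hx0e
        obtain ⟨y1, y2, g, s', t', hy1D, hy2D, h12', hs', ht', hst', hcomby, hg0, hgy1, hgy2,
          hconeY⟩ := support_at hDc hDcl hDb hD0 hy0g hy0e
        -- build bases
        have hx2ne : x2 ≠ 0 := by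
          intro hx
          rw [hx, map_zero] at hfx2
          linarith
        have hy2ne : y2 ≠ 0 := by
          intro hy
          rw [hy, map_zero] at hgy2
          linarith
        have hindX : LinearIndependent ℝ ![x1, x2] := by
          rw [linearIndependent_fin2]
          refine ⟨by simpa using hx2ne, fun c => ?_⟩
          simp only [Matrix.cons_val_one, Matrix.head_cons, Matrix.cons_val_zero]
          intro hcx
          have hfc : f (c • x2) = f x1 := by rw [hcx]
          rw [map_smul, smul_eq_mul, hfx1, hfx2] at hfc
          have hc1 : c = 1 := mul_right_cancel₀ hf0.ne' (by rw [one_mul]; exact hfc)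
          rw [hc1, one_smul] at hcx
          exact h12 hcx.symm
        have hindY : LinearIndependent ℝ ![y1, y2] := by
          rw [linearIndependent_fin2]
          refine ⟨by simpa using hy2ne, fun c => ?_⟩
          simp only [Matrix.cons_val_one, Matrix.head_cons, Matrix.cons_val_zero]
          intro hcy
          have hgc : g (c • y2) = g y1 := by rw [hcy]
          rw [map_smul, smul_eq_mul, hgy1, hgy2] at hgc
          have hc1 : c = 1 := mul_right_cancel₀ hg0.ne' (by rw [one_mul]; exact hgc)
          rw [hc1, one_smul] at hcy
          exact h12' hcy.symm
        have hcard : Fintype.card (Fin 2) = Module.finrank ℝ E2 := by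
          simp [finrank_euclideanSpace_fin]
        set bX : Module.Basis (Fin 2) ℝ E2 := basisOfLinearIndependentOfCardEqFinrank hindX hcard
          with hbXdef
        set bY : Module.Basis (Fin 2) ℝ E2 := basisOfLinearIndependentOfCardEqFinrank hindY hcard
          with hbYdef
        have hbX0 : bX 0 = x1 := by rw [hbXdef, coe_basisOfLinearIndependentOfCardEqFinrank]; rfl
        have hbX1 : bX 1 = x2 := by rw [hbXdef, coe_basisOfLinearIndependentOfCardEqFinrank]; rfl
        have hbY0 : bY 0 = y1 := by rw [hbYdef, coe_basisOfLinearIndependentOfCardEqFinrank]; rfl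
        have hbY1 : bY 1 = y2 := by rw [hbYdef, coe_basisOfLinearIndependentOfCardEqFinrank]; rfl
        have hdecX : ∀ u : E2, (bX.coord 0 u) • x1 + (bX.coord 1 u) • x2 = u := by
          intro u
          have := bX.sum_repr u
          rw [Fin.sum_univ_two, hbX0, hbX1] at this
          simpa [Module.Basis.coord_apply] using this
        have hdecY : ∀ u : E2, (bY.coord 0 u) • y1 + (bY.coord 1 u) • y2 = u := by
          intro u
          have := bY.sum_repr u
          rw [Fin.sum_univ_two, hbY0, hbY1] at this
          simpa [Module.Basis.coord_apply] using this
        have hcoordlin : ∀ (bb : Module.Basis (Fin 2) ℝ E2) (i : Fin 2) (α β : ℝ) (u u' : E2),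
            bb.coord i (α • u + β • u') = α * bb.coord i u + β * bb.coord i u' := by
          intro bb i α β u u'
          rw [map_add, map_smul, map_smul, smul_eq_mul, smul_eq_mul]
        have hcoordself : ∀ (bb : Module.Basis (Fin 2) ℝ E2) (i j : Fin 2),
            bb.coord i (bb j) = if j = i then 1 else 0 := by
          intro bb i j
          rw [Module.Basis.coord_apply, Module.Basis.repr_self, Finsupp.single_apply]
        have hcoordX : ∀ (α β : ℝ), bX.coord 0 (α • x1 + β • x2) = α ∧
            bX.coord 1 (α • x1 + β • x2) = β := by
          intro α β
          constructor
          · rw [← hbX0, ← hbX1, hcoordlin, hcoordself, hcoordself]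
            norm_num
          · rw [← hbX0, ← hbX1, hcoordlin, hcoordself, hcoordself]
            norm_num
        have hcoordY : ∀ (α β : ℝ), bY.coord 0 (α • y1 + β • y2) = α ∧
            bY.coord 1 (α • y1 + β • y2) = β := by
          intro α β
          constructor
          · rw [← hbY0, ← hbY1, hcoordlin, hcoordself, hcoordself]
            norm_num
          · rw [← hbY0, ← hbY1, hcoordlin, hcoordself, hcoordself]
            norm_num
        set U : Set E2 := {u : E2 | 0 < bX.coord 0 u ∧ 0 < bX.coord 1 u ∧
            0 < bY.coord 0 (-u) ∧ 0 < bY.coord 1 (-u)} with hU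
        have hcontc : ∀ (bb : Module.Basis (Fin 2) ℝ E2) (i : Fin 2),
            Continuous fun u : E2 => bb.coord i u := fun bb i =>
          (bb.coord i).continuous_of_finiteDimensional
        have hUopen : IsOpen U := by
          have c1 := hcontc bX 0
          have c2 := hcontc bX 1
          have c3 : Continuous fun u : E2 => bY.coord 0 (-u) :=
            (hcontc bY 0).comp continuous_neg
          have c4 : Continuous fun u : E2 => bY.coord 1 (-u) :=
            (hcontc bY 1).comp continuous_neg
          exact ((isOpen_lt continuous_const c1).inter ((isOpen_lt continuous_const c2).inter
            ((isOpen_lt continuous_const c3).inter (isOpen_lt continuous_const c4))))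
        have hwX : w = (b * s) • x1 + (b * t) • x2 := by
          have : w = b • x0 := by
            rw [hx0def, smul_smul, mul_inv_cancel₀ hbpos.ne', one_smul]
          rw [this, ← hcombx, smul_add, smul_smul, smul_smul]
        have hwY : -w = (a * s') • y1 + (a * t') • y2 := by
          have : -w = a • y0 := by
            rw [hy0def, smul_smul, mul_inv_cancel₀ hapos.ne', one_smul]
          rw [this, ← hcomby, smul_add, smul_smul, smul_smul]
        have hwU : w ∈ U := by
          refine ⟨?_, ?_, ?_, ?_⟩
          · rw [hwX, (hcoordX _ _).1]; positivity
          · rw [hwX, (hcoordX _ _).2]; positivity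
          · rw [hwY, (hcoordY _ _).1]; positivity
          · rw [hwY, (hcoordY _ _).2]; positivity
        set Lmap : E2 →ₗ[ℝ] ℝ :=
          K • ((bX.coord 0 : E2 →ₗ[ℝ] ℝ) + bX.coord 1) - ((bY.coord 0 : E2 →ₗ[ℝ] ℝ) + bY.coord 1)
          with hLdef
        have hLu : ∀ u ∈ U, h u = Lmap u := by
          rintro u ⟨hu1, hu2, hu3, hu4⟩
          have hgu : gauge D u = bX.coord 0 u + bX.coord 1 u := by
            conv_lhs => rw [← hdecX u]
            exact hconeX _ _ hu1.le hu2.le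
          have hgnu : gauge D (-u) = bY.coord 0 (-u) + bY.coord 1 (-u) := by
            conv_lhs => rw [← hdecY (-u)]
            exact hconeY _ _ hu3.le hu4.le
          simp only [hh, hgu, hgnu, hLdef, LinearMap.sub_apply, LinearMap.smul_apply,
            LinearMap.add_apply, map_neg, smul_eq_mul]
          ring
        have hvex : ∃ v : E2, v ≠ 0 ∧ Lmap v = 0 := by
          have hker : LinearMap.ker Lmap ≠ ⊥ := by
            intro hbot
            have hinj : Function.Injective Lmap := LinearMap.ker_eq_bot.1 hbot
            have := LinearMap.finrank_le_finrank_of_injective hinj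
            rw [finrank_euclideanSpace_fin, Module.finrank_self] at this
            omega
          obtain ⟨v, hv1, hv2⟩ := Submodule.exists_mem_ne_zero_of_ne_bot hker
          exact ⟨v, hv2, hv1⟩
        obtain ⟨v, hvne, hLv⟩ := hvex
        obtain ⟨ε, hεpos, hball⟩ := Metric.isOpen_iff.1 hUopen w hwU
        set δ : ℝ := ε / (2 * (‖v‖ + 1)) with hδ
        have hδpos : 0 < δ := by
          have : (0:ℝ) < ‖v‖ + 1 := by positivity
          positivity
        have hmemball : ∀ σ : ℝ, |σ| ≤ δ → w + σ • v ∈ U := by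
          intro σ hσ
          apply hball
          rw [Metric.mem_ball, dist_eq_norm]
          have : w + σ • v - w = σ • v := by abel
          rw [this, norm_smul, Real.norm_eq_abs]
          have h1 : |σ| * ‖v‖ ≤ δ * ‖v‖ := mul_le_mul_of_nonneg_right hσ (norm_nonneg v)
          have h2 : δ * ‖v‖ < ε := by
            rw [hδ]
            rw [div_mul_eq_mul_div, div_lt_iff₀ (by positivity)]
            nlinarith [norm_nonneg v, hεpos]
          linarith
        have hBmem : ∀ σ : ℝ, |σ| ≤ δ → w + σ • v ∈ B := by
          intro σ hσ
          have hu := hmemball σ hσ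
          have : h (w + σ • v) = Lmap (w + σ • v) := hLu _ hu
          simp only [hB, Set.mem_setOf_eq]
          rw [this, map_add, map_smul, hLv, smul_eq_mul, mul_zero, add_zero,
            ← hLu w hwU, hw1]
        have m1 : w + δ • v ∈ B := hBmem δ (by rw [abs_of_pos hδpos])
        have m2 : w + (-δ) • v ∈ B := hBmem (-δ) (by rw [abs_neg, abs_of_pos hδpos])
        have hseg : w ∈ openSegment ℝ (w + δ • v) (w + (-δ) • v) := by
          refine ⟨1/2, 1/2, by norm_num, by norm_num, by norm_num, ?_⟩
          module
        have he1 := hwmin m1 m2 hseg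
        have hz : δ • v = 0 := by
          have := he1
          rwa [add_eq_left] at this
        rcases smul_eq_zero.1 hz with hδ0 | hv0
        · exact hδpos.ne' hδ0
        · exact hvne hv0
  apply Set.Subset.antisymm
  · calc B = closure (convexHull ℝ (B.extremePoints ℝ)) :=
        (closure_convexHull_extremePoints hBcomp hBconv).symm
      _ ⊆ closure (convexHull ℝ (sp '' ↑A)) := closure_mono (convexHull_mono hextB)
      _ = convexHull ℝ (sp '' ↑A) :=
        (((A.finite_toSet.image sp).isCompact_convexHull ℝ).isClosed).closure_eq
  · refine convexHull_min ?_ hBconv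
    rintro z ⟨d, hd, rfl⟩
    exact le_of_eq (hspB d hd)

end HilbertAux

local notation "E2" => EuclideanSpace ℝ (Fin 2)

set_option maxHeartbeats 2000000 in
/-- In the Hilbert geometry of a convex `m`-gon, the closed Hilbert ball
`B(p,ρ)` is a convex polygon with at most `2m` vertices: it is the convex hull of the
(at most) `2m` points at Hilbert distance `ρ` from `p` along the spokes through the
vertices of `Ω`. -/
theorem hilbertBall_polygon (V : Finset (EuclideanSpace ℝ (Fin 2))) (m : ℕ)
    (hm : V.card = m) (Ω : Set (EuclideanSpace ℝ (Fin 2)))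
    (hΩ : Ω = convexHull ℝ (V : Set (EuclideanSpace ℝ (Fin 2))))
    (hint : (interior Ω).Nonempty)
    (p : EuclideanSpace ℝ (Fin 2)) (hp : p ∈ interior Ω) (ρ : ℝ) (hρ : 0 < ρ) :
    ∃ S : Finset (EuclideanSpace ℝ (Fin 2)),
      S.card ≤ 2 * m ∧
      (∀ x ∈ S, x ∈ interior Ω ∧ hilbertDist Ω p x = ρ ∧
        ∃ v ∈ V, Collinear ℝ ({p, v, x} : Set (EuclideanSpace ℝ (Fin 2)))) ∧
      {x | x ∈ interior Ω ∧ hilbertDist Ω p x ≤ ρ} =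
        convexHull ℝ (S : Set (EuclideanSpace ℝ (Fin 2))) := by
  have hΩconv : Convex ℝ Ω := hΩ ▸ convex_convexHull ℝ _
  have hΩcomp : IsCompact Ω := hΩ ▸ V.finite_toSet.isCompact_convexHull ℝ
  set D : Set E2 := (p + ·) ⁻¹' Ω with hD
  have hDc : Convex ℝ D := by
    intro x hx y hy s t hs ht hst
    simp only [hD, Set.mem_preimage] at hx hy ⊢
    have he : p + (s • x + t • y) = s • (p + x) + t • (p + y) := by
      have : s • (p + x) + t • (p + y) = (s + t) • p + (s • x + t • y) := by module
      rw [this, hst, one_smul]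
    rw [he]
    exact hΩconv hx hy hs ht hst
  have himg : D = (fun x => x - p) '' Ω := by
    ext z
    simp only [hD, Set.mem_preimage, Set.mem_image]
    constructor
    · intro hq; exact ⟨p + z, hq, by abel⟩
    · rintro ⟨x, hx, rfl⟩
      have : p + (x - p) = x := by abel
      rwa [this]
  have hDcomp : IsCompact D := himg ▸ hΩcomp.image (continuous_id.sub continuous_const)
  have hDcl := hDcomp.isClosed
  have hDb := hDcomp.isBounded
  have hintD : interior D = (p + ·) ⁻¹' interior Ω :=
    ((Homeomorph.addLeft p).preimage_interior Ω).symm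
  have h0 : (0:E2) ∈ interior D := by
    rw [hintD]; simpa using hp
  have hD0 : D ∈ 𝓝 0 := mem_interior_iff_mem_nhds.1 h0
  -- translation commutes with convex hulls
  have haffsub : ∀ (T : Set E2),
      (fun x => x - p) '' (convexHull ℝ T) = convexHull ℝ ((fun x => x - p) '' T) := by
    intro T
    have h1 : (fun x : E2 => x - p) = fun x : E2 => (-p) + x := by
      funext x; rw [sub_eq_neg_add]
    rw [h1]
    calc (fun x : E2 => (-p) + x) '' (convexHull ℝ T) = (-p) +ᵥ (convexHull ℝ T) := by
          simp [← Set.image_vadd, vadd_eq_add]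
      _ = convexHull ℝ ((-p) +ᵥ T) := (convexHull_vadd _ _).symm
      _ = convexHull ℝ ((fun x : E2 => (-p) + x) '' T) := by
          simp [← Set.image_vadd, vadd_eq_add]
  have haffadd : ∀ (T : Set E2),
      (fun w => p + w) '' (convexHull ℝ T) = convexHull ℝ ((fun w => p + w) '' T) := by
    intro T
    calc (fun w : E2 => p + w) '' (convexHull ℝ T) = p +ᵥ (convexHull ℝ T) := by
          simp [← Set.image_vadd, vadd_eq_add]
      _ = convexHull ℝ (p +ᵥ T) := (convexHull_vadd _ _).symm
      _ = convexHull ℝ ((fun w : E2 => p + w) '' T) := by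
          simp [← Set.image_vadd, vadd_eq_add]
  have hDhull : D = convexHull ℝ ((fun v => v - p) '' ↑V) := by
    rw [himg, hΩ, haffsub]
  have hextD : D.extremePoints ℝ ⊆ (fun v => v - p) '' ↑V := by
    rw [hDhull]; exact extremePoints_convexHull_subset
  -- the finset of spoke directions
  set A : Finset E2 :=
    ((V.image (fun v => v - p)) ∪ (V.image (fun v => v - p)).image (fun d => -d)).erase 0
    with hA
  have hA0 : ∀ d ∈ A, d ≠ (0:E2) := fun d hd => (Finset.mem_erase.1 hd).1
  have hAsym : ∀ d ∈ A, -d ∈ A := by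
    intro d hd
    rw [hA, Finset.mem_erase] at hd ⊢
    refine ⟨neg_ne_zero.2 hd.1, ?_⟩
    rcases Finset.mem_union.1 hd.2 with h1 | h1
    · exact Finset.mem_union.2 (Or.inr (Finset.mem_image.2 ⟨d, h1, rfl⟩))
    · obtain ⟨e, he, hde⟩ := Finset.mem_image.1 h1
      rw [← hde, neg_neg]
      exact Finset.mem_union.2 (Or.inl he)
  have hextA : D.extremePoints ℝ ⊆ ↑A ∪ {0} := by
    intro z hz
    obtain ⟨v, hv, rfl⟩ := hextD hz
    rcases eq_or_ne (v - p) 0 with h0' | h0'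
    · exact Or.inr (by simpa using h0')
    · left
      show v - p ∈ (↑A : Set E2)
      rw [hA]
      exact Finset.mem_coe.2 (Finset.mem_erase.2 ⟨h0', Finset.mem_union.2
        (Or.inl (Finset.mem_image.2 ⟨v, Finset.mem_coe.1 hv, rfl⟩))⟩)
  set K : ℝ := Real.exp (2 * ρ) with hKdef
  have hK : 1 < K := by
    rw [hKdef, show (1:ℝ) = Real.exp 0 from (Real.exp_zero).symm]
    exact Real.exp_lt_exp.2 (by positivity)
  have hK0 : (0:ℝ) < K - 1 := by linarith
  have hBH := ball_eq_hull hDc hDcomp hD0 A hA0 hAsym hextA hK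
  have hgnn : ∀ z : E2, 0 ≤ gauge D z := fun z => gauge_nonneg z
  have hdist : ∀ w : E2, w ≠ 0 → p + w ∈ interior Ω →
      hilbertDist Ω p (p + w) = (1/2) * Real.log ((1 + gauge D (-w)) / (1 - gauge D w)) :=
    fun w hw hmem => hilbertDist_formula hΩconv hΩcomp hp hw hmem
  have hiff : ∀ w : E2, w ≠ 0 →
      ((p + w ∈ interior Ω ∧ hilbertDist Ω p (p + w) ≤ ρ) ↔
        gauge D (-w) + K * gauge D w ≤ K - 1) := by
    intro w hw
    constructor
    · rintro ⟨hmem, hle⟩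
      have hwD : w ∈ interior D := by rw [hintD]; exact hmem
      have hb1 : gauge D w < 1 := (gauge_lt_one_iff_mem_interior hDc hD0).2 hwD
      rw [hdist w hw hmem] at hle
      have hXpos : 0 < (1 + gauge D (-w)) / (1 - gauge D w) := by
        apply div_pos
        · linarith [hgnn (-w)]
        · linarith
      have hlog : Real.log ((1 + gauge D (-w)) / (1 - gauge D w)) ≤ 2 * ρ := by linarith
      have hX : (1 + gauge D (-w)) / (1 - gauge D w) ≤ K := by
        rw [hKdef, ← Real.exp_log hXpos]
        exact Real.exp_le_exp.2 hlog
      rw [div_le_iff₀ (by linarith : (0:ℝ) < 1 - gauge D w)] at hX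
      nlinarith [hX]
    · intro hle
      have hb1 : gauge D w < 1 := by
        have h1 : K * gauge D w ≤ K - 1 := by linarith [hgnn (-w)]
        nlinarith [hgnn w]
      have hmem : p + w ∈ interior Ω := by
        have hwD : w ∈ interior D := (gauge_lt_one_iff_mem_interior hDc hD0).1 hb1
        rw [hintD] at hwD; exact hwD
      refine ⟨hmem, ?_⟩
      rw [hdist w hw hmem]
      have hX : (1 + gauge D (-w)) / (1 - gauge D w) ≤ K := by
        rw [div_le_iff₀ (by linarith : (0:ℝ) < 1 - gauge D w)]
        nlinarith [hle]
      have hXpos : 0 < (1 + gauge D (-w)) / (1 - gauge D w) :=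
        div_pos (by linarith [hgnn (-w)]) (by linarith)
      have hlog : Real.log ((1 + gauge D (-w)) / (1 - gauge D w)) ≤ Real.log K := by
        rw [← Real.exp_log hXpos]
        exact Real.log_le_log (Real.exp_pos _) (by rwa [Real.exp_log hXpos])
      rw [hKdef, Real.log_exp] at hlog
      linarith
  set S : Finset E2 := A.image
    (fun d => p + ((K-1)/(gauge D (-d) + K * gauge D d)) • d) with hS
  have hcollinear : ∀ (v z : E2), (∃ r : ℝ, z = r • (v - p) + p) →
      Collinear ℝ ({p, v, z} : Set E2) := by
    rintro v z ⟨r, hr⟩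
    rw [collinear_iff_of_mem (Set.mem_insert p {v, z})]
    refine ⟨v - p, ?_⟩
    intro q hq
    simp only [Set.mem_insert_iff, Set.mem_singleton_iff] at hq
    rcases hq with rfl | rfl | rfl
    · exact ⟨0, by simp⟩
    · refine ⟨1, ?_⟩
      rw [one_smul, vadd_eq_add, sub_add_cancel]
    · exact ⟨r, by rw [hr, vadd_eq_add]⟩
  refine ⟨S, ?_, ?_, ?_⟩
  · -- cardinality
    have h1 : S.card ≤ A.card := Finset.card_image_le
    have h2 : A.card ≤ ((V.image (fun v => v - p)) ∪
        (V.image (fun v => v - p)).image (fun d => -d)).card := Finset.card_erase_le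
    have h3 := Finset.card_union_le (V.image (fun v => v - p))
      ((V.image (fun v => v - p)).image (fun d => -d))
    have h4 : (V.image (fun v => v - p)).card ≤ m := by
      rw [← hm]; exact Finset.card_image_le
    have h5 : ((V.image (fun v => v - p)).image (fun d => -d)).card ≤ m :=
      le_trans Finset.card_image_le h4
    omega
  · -- spoke point properties
    intro x hx
    obtain ⟨d, hdA, rfl⟩ := Finset.mem_image.1 hx
    have hdne := hA0 d hdA
    have hdpos : 0 < gauge D (-d) + K * gauge D d := by
      have h1 : 0 < gauge D d := gauge_pos_of_ne_zero hD0 hDb hdne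
      nlinarith [hgnn (-d)]
    have hcd : 0 < (K-1)/(gauge D (-d) + K * gauge D d) := by positivity
    have hwne : ((K-1)/(gauge D (-d) + K * gauge D d)) • d ≠ 0 :=
      smul_ne_zero hcd.ne' hdne
    have heq : gauge D (-(((K-1)/(gauge D (-d) + K * gauge D d)) • d)) +
        K * gauge D (((K-1)/(gauge D (-d) + K * gauge D d)) • d) = K - 1 := by
      rw [← smul_neg, gauge_smul_of_nonneg hcd.le, gauge_smul_of_nonneg hcd.le,
        smul_eq_mul, smul_eq_mul]
      field_simp
    have hintx := (hiff _ hwne).2 heq.le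
    refine ⟨hintx.1, ?_, ?_⟩
    · have hb1 : gauge D (((K-1)/(gauge D (-d) + K * gauge D d)) • d) < 1 := by
        have h1 : K * gauge D (((K-1)/(gauge D (-d) + K * gauge D d)) • d) ≤ K - 1 := by
          linarith [hgnn (-(((K-1)/(gauge D (-d) + K * gauge D d)) • d))]
        nlinarith [hgnn (((K-1)/(gauge D (-d) + K * gauge D d)) • d)]
      rw [hdist _ hwne hintx.1]
      have harg : (1 + gauge D (-(((K-1)/(gauge D (-d) + K * gauge D d)) • d))) /
          (1 - gauge D (((K-1)/(gauge D (-d) + K * gauge D d)) • d)) = K := by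
        rw [div_eq_iff (by linarith : (1:ℝ) - gauge D
          (((K-1)/(gauge D (-d) + K * gauge D d)) • d) ≠ 0)]
        nlinarith [heq]
      rw [harg, hKdef, Real.log_exp]
      ring
    · -- collinearity with a vertex
      rw [hA, Finset.mem_erase] at hdA
      rcases Finset.mem_union.1 hdA.2 with h1 | h1
      · obtain ⟨v, hv, hveq⟩ := Finset.mem_image.1 h1
        refine ⟨v, hv, hcollinear v _ ?_⟩
        refine ⟨(K-1)/(gauge D (-d) + K * gauge D d), ?_⟩
        rw [← hveq]
        module
      · obtain ⟨e, he, hde⟩ := Finset.mem_image.1 h1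
        obtain ⟨v, hv, hveq⟩ := Finset.mem_image.1 he
        refine ⟨v, hv, hcollinear v _ ?_⟩
        refine ⟨-((K-1)/(gauge D (-d) + K * gauge D d)), ?_⟩
        rw [← hde, ← hveq]
        module
  · -- the ball is the convex hull
    have hsetball : {x | x ∈ interior Ω ∧ hilbertDist Ω p x ≤ ρ} =
        (fun w => p + w) '' {w : E2 | gauge D (-w) + K * gauge D w ≤ K - 1} := by
      ext x
      simp only [Set.mem_setOf_eq, Set.mem_image]
      constructor
      · rintro ⟨hx1, hx2⟩
        refine ⟨x - p, ?_, by abel⟩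
        rcases eq_or_ne (x - p) 0 with h0' | h0'
        · rw [h0']
          simp only [neg_zero, gauge_zero, mul_zero, add_zero, Set.mem_setOf_eq]
          linarith
        · have hx' : p + (x - p) = x := by abel
          exact (hiff (x - p) h0').1 ⟨by rw [hx']; exact hx1, by rw [hx']; exact hx2⟩
      · rintro ⟨w, hwB, rfl⟩
        rcases eq_or_ne w 0 with rfl | hw
        · constructor
          · simpa using hp
          · have : p + (0:E2) = p := by simp
            rw [this]
            simp only [hilbertDist, if_pos rfl]
            exact hρ.le
        · exact (hiff w hw).2 hwB
    have hSco : (↑S : Set E2) = (fun w => p + w) ''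
        ((fun d => ((K-1)/(gauge D (-d) + K * gauge D d)) • d) '' ↑A) := by
      rw [hS, Finset.coe_image, ← Set.image_comp]
      rfl
    rw [hsetball, hBH, haffadd, ← hSco]
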